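/- Let λ, μ ∈ ℝ satisfy μ > 0 and 3λ + 2μ > 0, and let ω = (ω₁, ω₂, 0) be a unit vector. Then det(2M₀ − iM₁) = 2μ(4μ(λ+2μ) + (λ+μ)²) ≠ 0. Consequently, for every integer d ≥ 1 the matrix R₁^d := d(2M₀ − iM₁) is invertible, and for every integer d ≥ 2 the matrix R₂^d := −d(d−1)M₀ is invertible. -/

import Mathlib

open Matrix

noncomputable section

/-- Isotropic elasticity tensor `C_{ijkl} = λ δ_{ij} δ_{kl} + μ (δ_{ik} δ_{jl} + δ_{il} δ_{jk})`. -/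
def isoC (lam mu : ℝ) (i j k l : Fin 3) : ℝ :=
  lam * (if i = j then (1:ℝ) else 0) * (if k = l then (1:ℝ) else 0)
    + mu * ((if i = k then (1:ℝ) else 0) * (if j = l then (1:ℝ) else 0)
      + (if i = l then (1:ℝ) else 0) * (if j = k then (1:ℝ) else 0))

/-- The matrix `⟨ξ,ζ⟩` with entries `⟨ξ,ζ⟩_{ik} = Σ_{j,l} C_{ijkl} ξ_j ζ_l`. -/
def bil (lam mu : ℝ) (ξ ζ : Fin 3 → ℝ) : Matrix (Fin 3) (Fin 3) ℝ :=
  Matrix.of fun i k => ∑ j, ∑ l, isoC lam mu i j k l * ξ j * ζ l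

/-- `M₀ = ⟨e₃,e₃⟩`. -/
def Mat0 (lam mu : ℝ) : Matrix (Fin 3) (Fin 3) ℝ := bil lam mu ![0,0,1] ![0,0,1]

/-- `M₁ = ⟨e₃,ω⟩ + ⟨ω,e₃⟩` for `ω = (ω₁,ω₂,0)`. -/
def Mat1 (lam mu ω1 ω2 : ℝ) : Matrix (Fin 3) (Fin 3) ℝ :=
  bil lam mu ![0,0,1] ![ω1,ω2,0] + bil lam mu ![ω1,ω2,0] ![0,0,1]

/-- `M₂ = ⟨ω,ω⟩`. -/
def Mat2 (lam mu ω1 ω2 : ℝ) : Matrix (Fin 3) (Fin 3) ℝ :=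
  bil lam mu ![ω1,ω2,0] ![ω1,ω2,0]

/-- `⟨e₃,ω⟩`. -/
def E3w (lam mu ω1 ω2 : ℝ) : Matrix (Fin 3) (Fin 3) ℝ := bil lam mu ![0,0,1] ![ω1,ω2,0]

/-- `⟨ω,e₃⟩`. -/
def wE3 (lam mu ω1 ω2 : ℝ) : Matrix (Fin 3) (Fin 3) ℝ := bil lam mu ![ω1,ω2,0] ![0,0,1]

/-- The 6×6 Stroh matrix
`K⁰ = [[−M₀⁻¹⟨e₃,ω⟩, −M₀⁻¹], [M₂ − ⟨ω,e₃⟩M₀⁻¹⟨e₃,ω⟩, −⟨ω,e₃⟩M₀⁻¹]]`. -/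
def Stroh (lam mu ω1 ω2 : ℝ) : Matrix (Fin 6) (Fin 6) ℝ :=
  Matrix.reindex finSumFinEquiv finSumFinEquiv
    (Matrix.fromBlocks
      (-((Mat0 lam mu)⁻¹ * E3w lam mu ω1 ω2)) (-(Mat0 lam mu)⁻¹)
      (Mat2 lam mu ω1 ω2 - wE3 lam mu ω1 ω2 * (Mat0 lam mu)⁻¹ * E3w lam mu ω1 ω2)
      (-(wE3 lam mu ω1 ω2 * (Mat0 lam mu)⁻¹)))

/-- Complex versions (real matrices regarded as complex matrices). -/
def Mat0c (lam mu : ℝ) : Matrix (Fin 3) (Fin 3) ℂ := (Mat0 lam mu).map Complex.ofReal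

def Mat1c (lam mu ω1 ω2 : ℝ) : Matrix (Fin 3) (Fin 3) ℂ := (Mat1 lam mu ω1 ω2).map Complex.ofReal

def Mat2c (lam mu ω1 ω2 : ℝ) : Matrix (Fin 3) (Fin 3) ℂ := (Mat2 lam mu ω1 ω2).map Complex.ofReal

def E3wc (lam mu ω1 ω2 : ℝ) : Matrix (Fin 3) (Fin 3) ℂ := (E3w lam mu ω1 ω2).map Complex.ofReal

def Strohc (lam mu ω1 ω2 : ℝ) : Matrix (Fin 6) (Fin 6) ℂ := (Stroh lam mu ω1 ω2).map Complex.ofReal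

end

/-- `det(2M₀ − iM₁) = 2μ(4μ(λ+2μ) + (λ+μ)²) ≠ 0`; consequently `R₁^d = d(2M₀ − iM₁)` is
invertible for `d ≥ 1` and `R₂^d = −d(d−1)M₀` is invertible for `d ≥ 2`. -/
lemma det_aux (lam mu ω1 ω2 : ℝ) (hω : ω1 ^ 2 + ω2 ^ 2 = 1) :
    Matrix.det ((2 : ℂ) • Mat0c lam mu - Complex.I • Mat1c lam mu ω1 ω2)
        = ((2 * mu * (4 * mu * (lam + 2 * mu) + (lam + mu) ^ 2) : ℝ) : ℂ) := by
  have hc : (ω1:ℂ)^2 + (ω2:ℂ)^2 = 1 := by exact_mod_cast hω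
  simp only [Mat0c, Mat1c, Mat0, Mat1, bil, isoC, Matrix.det_fin_three,
    Matrix.sub_apply, Matrix.smul_apply, Matrix.map_apply, Matrix.add_apply,
    Matrix.of_apply, Fin.sum_univ_three, Matrix.cons_val_zero, Matrix.cons_val_one,
    Matrix.cons_val_two, Matrix.head_cons, Matrix.tail_cons]
  norm_num [Fin.ext_iff]
  ring_nf
  linear_combination (-2*(mu:ℂ)*(lam+mu)^2*((ω1:ℂ)^2+(ω2:ℂ)^2)) * Complex.I_sq + (2*(mu:ℂ)*(lam+mu)^2) * hc

lemma det_Mat0c (lam mu : ℝ) : Matrix.det (Mat0c lam mu) = ((mu^2*(lam+2*mu) : ℝ) : ℂ) := by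
  simp only [Mat0c, Mat0, bil, isoC, Matrix.det_fin_three, Matrix.map_apply,
    Matrix.of_apply, Fin.sum_univ_three, Matrix.cons_val_zero, Matrix.cons_val_one,
    Matrix.cons_val_two, Matrix.head_cons, Matrix.tail_cons]
  norm_num [Fin.ext_iff]
  ring

theorem stmt8 (lam mu ω1 ω2 : ℝ) (hmu : 0 < mu) (hconv : 0 < 3 * lam + 2 * mu)
    (hω : ω1 ^ 2 + ω2 ^ 2 = 1) :
    Matrix.det ((2 : ℂ) • Mat0c lam mu - Complex.I • Mat1c lam mu ω1 ω2)
        = ((2 * mu * (4 * mu * (lam + 2 * mu) + (lam + mu) ^ 2) : ℝ) : ℂ) ∧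
      ((2 * mu * (4 * mu * (lam + 2 * mu) + (lam + mu) ^ 2) : ℝ) : ℂ) ≠ 0 ∧
      (∀ d : ℕ, 1 ≤ d →
        IsUnit ((d : ℂ) • ((2 : ℂ) • Mat0c lam mu - Complex.I • Mat1c lam mu ω1 ω2))) ∧
      (∀ d : ℕ, 2 ≤ d →
        IsUnit ((-((d : ℂ) * ((d : ℂ) - 1))) • Mat0c lam mu)) := by
  
  have hdet := det_aux lam mu ω1 ω2 hω
  have hl3 : (0:ℝ) < lam + 3 * mu := by linarith
  have hl2 : (0:ℝ) < lam + 2 * mu := by linarith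
  have hposR : (0:ℝ) < 2 * mu * (4 * mu * (lam + 2 * mu) + (lam + mu) ^ 2) := by
    nlinarith [mul_pos hmu (mul_pos hl3 hl3)]
  have hne : ((2 * mu * (4 * mu * (lam + 2 * mu) + (lam + mu) ^ 2) : ℝ) : ℂ) ≠ 0 := by
    exact_mod_cast hposR.ne'
  refine ⟨hdet, hne, ?_, ?_⟩
  · intro d hd
    rw [Matrix.isUnit_iff_isUnit_det, Matrix.det_smul, hdet, isUnit_iff_ne_zero]
    have hd0 : (d:ℂ) ≠ 0 := Nat.cast_ne_zero.2 (by omega)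
    exact mul_ne_zero (pow_ne_zero _ hd0) hne
  · intro d hd
    rw [Matrix.isUnit_iff_isUnit_det, Matrix.det_smul, det_Mat0c, isUnit_iff_ne_zero]
    have h1 : (0:ℝ) < mu^2*(lam+2*mu) := by nlinarith [mul_pos (mul_pos hmu hmu) hl2]
    have h2 : ((mu^2*(lam+2*mu) : ℝ) : ℂ) ≠ 0 := by exact_mod_cast h1.ne'
    have hd0 : (d:ℂ) ≠ 0 := Nat.cast_ne_zero.2 (by omega)
    have hd1 : (d:ℂ) - 1 ≠ 0 := sub_ne_zero.2 (Nat.cast_ne_one.2 (by omega))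
    exact mul_ne_zero (pow_ne_zero _ (neg_ne_zero.2 (mul_ne_zero hd0 hd1))) h2
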